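/- Let p be an odd prime, k a finite field of characteristic p, V a 2-dimensional k-vector space, and H a subgroup of GL(V) such that V is an irreducible k[H]-module. Then the following are equivalent: (a) for every 𝔽_p[H]-submodule W ⊆ End_k(V) (i.e., every additive subgroup stable under the conjugation action of H), Hom_{𝔽_p}(W, V)^H = 0; (b) Hom_{𝔽_p}(End_k^0(V), V)^H = 0, where End_k^0(V) denotes the k-subspace of trace-zero endomorphisms. -/

import Mathlib

set_option maxHeartbeats 1000000
set_option synthInstance.maxHeartbeats 400000

/-- The conjugation action `A ↦ h A h⁻¹` of a linear automorphism `h` on endomorphisms. -/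
def conjEnd {k V : Type} [Field k] [AddCommGroup V] [Module k V]
    (h : V ≃ₗ[k] V) (A : Module.End k V) : Module.End k V :=
  (h : V →ₗ[k] V) ∘ₗ A ∘ₗ (h.symm : V →ₗ[k] V)

namespace Stmt11Aux

variable {k V : Type} [Field k] [AddCommGroup V] [Module k V]

lemma conjEnd_apply (h : V ≃ₗ[k] V) (A : Module.End k V) (v : V) :
    conjEnd h A v = h (A (h.symm v)) := rfl

lemma conjEnd_add (h : V ≃ₗ[k] V) (A B : Module.End k V) :
    conjEnd h (A + B) = conjEnd h A + conjEnd h B := by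
  ext v; simp [conjEnd_apply]

lemma conjEnd_smul (h : V ≃ₗ[k] V) (c : k) (A : Module.End k V) :
    conjEnd h (c • A) = c • conjEnd h A := by
  ext v; simp [conjEnd_apply]

lemma conjEnd_zero (h : V ≃ₗ[k] V) : conjEnd h (0 : Module.End k V) = 0 := by
  ext v; simp [conjEnd_apply]

lemma conjEnd_sub (h : V ≃ₗ[k] V) (A B : Module.End k V) :
    conjEnd h (A - B) = conjEnd h A - conjEnd h B := by
  ext v; simp [conjEnd_apply]

lemma conjEnd_mul (h : V ≃ₗ[k] V) (A B : Module.End k V) :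
    conjEnd h (A * B) = conjEnd h A * conjEnd h B := by
  ext v; simp [conjEnd_apply, Module.End.mul_apply]

lemma conjEnd_symm_conjEnd (h : V ≃ₗ[k] V) (A : Module.End k V) :
    conjEnd h.symm (conjEnd h A) = A := by
  ext v; simp [conjEnd_apply]

lemma conjEnd_conjEnd_symm (h : V ≃ₗ[k] V) (A : Module.End k V) :
    conjEnd h (conjEnd h.symm A) = A := by
  ext v; simp [conjEnd_apply]

lemma conjEnd_mul_equiv (e e' : V ≃ₗ[k] V) (A : Module.End k V) :
    conjEnd (e * e') A = conjEnd e (conjEnd e' A) := by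
  ext v; rfl

lemma conjEnd_inv (e : V ≃ₗ[k] V) (A : Module.End k V) :
    conjEnd e⁻¹ A = conjEnd e.symm A := rfl

/-- conjugation as a linear map -/
def conjEndₗ (h : V ≃ₗ[k] V) : Module.End k V →ₗ[k] Module.End k V where
  toFun := conjEnd h
  map_add' := conjEnd_add h
  map_smul' := conjEnd_smul h

@[simp] lemma conjEndₗ_apply (h : V ≃ₗ[k] V) (A : Module.End k V) :
    conjEndₗ h A = conjEnd h A := rfl

/-- conjugation as an additive equivalence -/
def conjEndₐ (h : V ≃ₗ[k] V) : Module.End k V ≃+ Module.End k V where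
  toFun := conjEnd h
  invFun := conjEnd h.symm
  left_inv := conjEnd_symm_conjEnd h
  right_inv := conjEnd_conjEnd_symm h
  map_add' := conjEnd_add h

@[simp] lemma conjEndₐ_apply (h : V ≃ₗ[k] V) (A : Module.End k V) :
    conjEndₐ h A = conjEnd h A := rfl

@[simp] lemma conjEndₐ_symm_apply (h : V ≃ₗ[k] V) (A : Module.End k V) :
    (conjEndₐ h).symm A = conjEnd h.symm A := rfl

lemma trace_conjEnd (h : V ≃ₗ[k] V) (A : Module.End k V) :
    LinearMap.trace k V (conjEnd h A) = LinearMap.trace k V A := by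
  have : conjEnd h A = h.conj A := by
    rw [LinearEquiv.conj_apply]; rfl
  rw [this, LinearMap.trace_conj']

/-- the trace bilinear form on endomorphisms -/
noncomputable def Bform : Module.End k V →ₗ[k] Module.End k V →ₗ[k] k :=
  (LinearMap.mul k (Module.End k V)).compr₂ (LinearMap.trace k V)

@[simp] lemma Bform_apply (A X : Module.End k V) :
    Bform A X = LinearMap.trace k V (A * X) := rfl

/-- pairing against a submodule -/
noncomputable def Tmap (U : Submodule k (Module.End k V)) :
    Module.End k V →ₗ[k] (↥U →ₗ[k] k) :=
  (Bform).compl₂ U.subtype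

@[simp] lemma Tmap_apply (U : Submodule k (Module.End k V)) (A : Module.End k V) (u : ↥U) :
    Tmap U A u = LinearMap.trace k V (A * ↑u) := rfl

lemma mem_ker_Tmap_iff (U : Submodule k (Module.End k V)) (A : Module.End k V) :
    A ∈ LinearMap.ker (Tmap U) ↔ ∀ u ∈ U, LinearMap.trace k V (A * u) = 0 := by
  constructor
  · intro hA u hu
    have := LinearMap.congr_fun (LinearMap.mem_ker.mp hA) ⟨u, hu⟩
    simpa using this
  · intro h
    rw [LinearMap.mem_ker]
    ext u
    simpa using h u u.2

section FinDim

variable [FiniteDimensional k V]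

lemma exists_mem_ker_Tmap (U Nsub : Submodule k (Module.End k V))
    (hlt : Module.finrank k ↥U < Module.finrank k ↥Nsub) :
    ∃ x ∈ Nsub, x ≠ 0 ∧ ∀ u ∈ U, LinearMap.trace k V (x * u) = 0 := by
  set T' : ↥Nsub →ₗ[k] (↥U →ₗ[k] k) := (Tmap U).domRestrict Nsub with hT'
  have hrank := LinearMap.finrank_range_add_finrank_ker T'
  have hr : Module.finrank k ↥(LinearMap.range T') ≤ Module.finrank k ↥U := by
    have h1 : Module.finrank k ↥(LinearMap.range T') ≤ Module.finrank k (↥U →ₗ[k] k) :=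
      Submodule.finrank_le _
    have h2 : Module.finrank k (↥U →ₗ[k] k) = Module.finrank k ↥U :=
      Subspace.dual_finrank_eq
    omega
  have hker : Module.finrank k ↥(LinearMap.ker T') ≠ 0 := by omega
  have : LinearMap.ker T' ≠ ⊥ := by
    intro hbot
    rw [hbot] at hker
    simp at hker
  obtain ⟨x, hx, hx0⟩ := Submodule.exists_mem_ne_zero_of_ne_bot this
  refine ⟨x.1, x.2, ?_, ?_⟩
  · intro h0; apply hx0; exact Subtype.ext h0
  · intro u hu
    have := LinearMap.congr_fun (LinearMap.mem_ker.mp hx) ⟨u, hu⟩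
    exact this

lemma matrix_sq {k : Type} [Field k] (h2 : (2:k) ≠ 0) (M : Matrix (Fin 2) (Fin 2) k)
    (h0 : M.trace = 0) (h1 : (M * M).trace = 0) : M * M = 0 := by
  rw [Matrix.trace_fin_two] at h0 h1
  have hd : M 1 1 = - M 0 0 := by linear_combination h0
  have hmm : ∀ i j, (M * M) i j = M i 0 * M 0 j + M i 1 * M 1 j := by
    intro i j
    rw [Matrix.mul_apply, Fin.sum_univ_two]
  rw [hmm 0 0, hmm 1 1] at h1
  have hx : M 0 0 * M 0 0 + M 0 1 * M 1 0 = 0 := by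
    apply mul_left_cancel₀ h2
    rw [mul_zero]
    linear_combination h1 + (M 0 0 - M 1 1) * hd
  ext i j
  rw [hmm i j]
  fin_cases i <;> fin_cases j <;> simp
  · linear_combination hx
  · linear_combination M 0 1 * h0
  · linear_combination M 1 0 * h0
  · linear_combination h1 - hx

lemma sq_eq_zero (hdim : Module.finrank k V = 2) (h2 : (2:k) ≠ 0) (A : Module.End k V)
    (h0 : LinearMap.trace k V A = 0) (h1 : LinearMap.trace k V (A * A) = 0) :
    A * A = 0 := by
  set b := Module.finBasisOfFinrankEq k V hdim with hb
  have hM : LinearMap.toMatrix b b (A * A) = LinearMap.toMatrix b b A * LinearMap.toMatrix b b A :=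
    LinearMap.toMatrix_mul b A A
  have h0' : (LinearMap.toMatrix b b A).trace = 0 := by
    rw [← LinearMap.trace_eq_matrix_trace k b]; exact h0
  have h1' : (LinearMap.toMatrix b b A * LinearMap.toMatrix b b A).trace = 0 := by
    rw [← hM, ← LinearMap.trace_eq_matrix_trace k b]; exact h1
  have := matrix_sq h2 _ h0' h1'
  apply (LinearMap.toMatrix b b).injective
  rw [hM, this, map_zero]

lemma trace_eq_two (hdim : Module.finrank k V = 2) :
    LinearMap.trace k V (1 : Module.End k V) = 2 := by
  rw [LinearMap.trace_one, hdim]; norm_num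

lemma nondeg (hdim : Module.finrank k V = 2) (h2 : (2:k) ≠ 0) (A : Module.End k V)
    (hA : LinearMap.trace k V A = 0)
    (h : ∀ X : Module.End k V, LinearMap.trace k V X = 0 → LinearMap.trace k V (X * A) = 0) :
    A = 0 := by
  have hall : ∀ X : Module.End k V, LinearMap.trace k V (X * A) = 0 := by
    intro X
    set c : k := (2:k)⁻¹ * LinearMap.trace k V X with hc
    have hX0 : LinearMap.trace k V (X - c • 1) = 0 := by
      rw [map_sub, map_smul, trace_eq_two hdim, hc, smul_eq_mul]
      field_simp
      ring
    have := h (X - c • 1) hX0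
    rw [sub_mul, map_sub, smul_mul_assoc, one_mul, map_smul, hA, smul_zero, sub_zero] at this
    exact this
  set b := Module.finBasisOfFinrankEq k V hdim with hb
  set MA := LinearMap.toMatrix b b A with hMA
  have hallM : ∀ P : Matrix (Fin 2) (Fin 2) k, (P * MA).trace = 0 := by
    intro P
    have := hall ((LinearMap.toMatrix b b).symm P)
    rw [LinearMap.trace_eq_matrix_trace k b, LinearMap.toMatrix_mul b,
      LinearEquiv.apply_symm_apply] at this
    exact this
  have hMA0 : MA = 0 := by
    ext i j
    fin_cases i <;> fin_cases j
    · have := hallM !![1,0;0,0]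
      simpa [Matrix.trace_fin_two, Matrix.mul_apply, Fin.sum_univ_two, Matrix.vecMul,
        dotProduct] using this
    · have := hallM !![0,0;1,0]
      simpa [Matrix.trace_fin_two, Matrix.mul_apply, Fin.sum_univ_two, Matrix.vecMul,
        dotProduct] using this
    · have := hallM !![0,1;0,0]
      simpa [Matrix.trace_fin_two, Matrix.mul_apply, Fin.sum_univ_two, Matrix.vecMul,
        dotProduct] using this
    · have := hallM !![0,0;0,1]
      simpa [Matrix.trace_fin_two, Matrix.mul_apply, Fin.sum_univ_two, Matrix.vecMul,
        dotProduct] using this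
  apply (LinearMap.toMatrix b b).injective
  rw [← hMA, hMA0, map_zero]

lemma finrank_N (hdim : Module.finrank k V = 2) (h2 : (2:k) ≠ 0) :
    Module.finrank k ↥(LinearMap.ker (LinearMap.trace k V)) = 3 := by
  have hE : Module.finrank k (Module.End k V) = 4 := by
    have := Module.finrank_linearMap k k V V
    rw [hdim] at this
    exact this
  have hsurj : LinearMap.range (LinearMap.trace k V) = ⊤ := by
    rw [LinearMap.range_eq_top]
    intro c
    refine ⟨(c * (2:k)⁻¹) • 1, ?_⟩
    rw [map_smul, trace_eq_two hdim, smul_eq_mul]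
    field_simp
  have h4 := LinearMap.finrank_range_add_finrank_ker (LinearMap.trace k V)
  rw [hsurj, finrank_top, Module.finrank_self] at h4
  have : Module.finrank k (Module.End k V) = Module.finrank k (V →ₗ[k] V) := rfl
  omega

lemma key_nondeg_line (hdim : Module.finrank k V = 2) (h2 : (2:k) ≠ 0)
    (H : Subgroup (V ≃ₗ[k] V))
    (hirr : ∀ W : Submodule k V,
      (∀ h : H, ∀ v ∈ W, (h : V ≃ₗ[k] V) v ∈ W) → W = ⊥ ∨ W = ⊤)
    (A : Module.End k V) (hA0 : LinearMap.trace k V A = 0) (hAne : A ≠ 0)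
    (hstab : ∀ h : H, ∃ c : k, conjEnd (h : V ≃ₗ[k] V) A = c • A) :
    LinearMap.trace k V (A * A) ≠ 0 := by
  intro h1
  have hsq : A * A = 0 := sq_eq_zero hdim h2 A hA0 h1
  have hker : ∀ h : H, ∀ v ∈ LinearMap.ker A, (h : V ≃ₗ[k] V) v ∈ LinearMap.ker A := by
    intro h v hv
    obtain ⟨c, hc⟩ := hstab h
    have hcne : c ≠ 0 := by
      rintro rfl
      apply hAne
      have : conjEnd (h : V ≃ₗ[k] V) A = 0 := by rw [hc, zero_smul]
      ext w
      have := congrArg (fun (B : Module.End k V) => B ((h : V ≃ₗ[k] V) w)) this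
      simp only [conjEnd_apply, LinearEquiv.symm_apply_apply, LinearMap.zero_apply] at this
      have := congrArg (h : V ≃ₗ[k] V).symm this
      simpa using this
    rw [LinearMap.mem_ker] at hv ⊢
    have := congrArg (fun (B : Module.End k V) => B ((h : V ≃ₗ[k] V) v)) hc
    simp only [conjEnd_apply, LinearEquiv.symm_apply_apply, LinearMap.smul_apply] at this
    rw [hv, map_zero] at this
    have := this.symm
    rw [smul_eq_zero] at this
    rcases this with h' | h'
    · exact absurd h' hcne
    · exact h'
  rcases hirr (LinearMap.ker A) hker with hbot | htop
  · apply hAne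
    ext v
    have h1 : A (A v) = 0 := by
      have := congrArg (fun (B : Module.End k V) => B v) hsq
      simpa [Module.End.mul_apply] using this
    have : A v ∈ LinearMap.ker A := LinearMap.mem_ker.mpr h1
    rw [hbot, Submodule.mem_bot] at this
    simp [this]
  · apply hAne
    ext v
    have : v ∈ LinearMap.ker A := htop ▸ Submodule.mem_top
    simpa using LinearMap.mem_ker.mp this

lemma VH_eq_bot (hdim : Module.finrank k V = 2)
    (H : Subgroup (V ≃ₗ[k] V))
    (hirr : ∀ W : Submodule k V,
      (∀ h : H, ∀ v ∈ W, (h : V ≃ₗ[k] V) v ∈ W) → W = ⊥ ∨ W = ⊤)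
    (v : V) (hv : ∀ h : H, (h : V ≃ₗ[k] V) v = v) : v = 0 := by
  by_contra hvne
  set VH : Submodule k V :=
    { carrier := {w | ∀ h : H, (h : V ≃ₗ[k] V) w = w}
      add_mem' := by intro a b ha hb h; rw [map_add, ha h, hb h]
      zero_mem' := by intro h; simp
      smul_mem' := by intro c a ha h; rw [map_smul, ha h] } with hVH
  have hVHstab : ∀ h : H, ∀ w ∈ VH, (h : V ≃ₗ[k] V) w ∈ VH := by
    intro h w hw
    have : (h : V ≃ₗ[k] V) w = w := hw h
    rw [this]; exact hw
  rcases hirr VH hVHstab with hbot | htop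
  · have : v ∈ VH := hv
    rw [hbot, Submodule.mem_bot] at this
    exact hvne this
  · have htriv : ∀ h : H, ∀ w : V, (h : V ≃ₗ[k] V) w = w := by
      intro h w
      have : w ∈ VH := htop ▸ Submodule.mem_top
      exact this h
    set L : Submodule k V := Submodule.span k {v} with hL
    have hLstab : ∀ h : H, ∀ w ∈ L, (h : V ≃ₗ[k] V) w ∈ L := by
      intro h w hw; rw [htriv h w]; exact hw
    rcases hirr L hLstab with hbot | htop'
    · rw [hL, Submodule.span_singleton_eq_bot] at hbot
      exact hvne hbot
    · have h1 : Module.finrank k ↥L = 1 := finrank_span_singleton hvne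
      rw [htop', finrank_top] at h1
      omega

end FinDim

section Stability

variable (H : Subgroup (V ≃ₗ[k] V))

/-- `H`-stability for `k`-submodules of endomorphisms -/
def StabM (U : Submodule k (Module.End k V)) : Prop :=
  ∀ h : H, ∀ A ∈ U, conjEnd (h : V ≃ₗ[k] V) A ∈ U

/-- `H`-stability for additive subgroups of endomorphisms -/
def StabA (U : AddSubgroup (Module.End k V)) : Prop :=
  ∀ h : H, ∀ A ∈ U, conjEnd (h : V ≃ₗ[k] V) A ∈ U

/-- minimal nonzero stable `k`-submodule -/
def MinM (S : Submodule k (Module.End k V)) : Prop :=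
  StabM H S ∧ S ≠ ⊥ ∧ ∀ S' ≤ S, StabM H S' → S' ≠ ⊥ → S' = S

/-- minimal nonzero stable additive subgroup -/
def MinA (T : AddSubgroup (Module.End k V)) : Prop :=
  StabA H T ∧ T ≠ ⊥ ∧ ∀ T' ≤ T, StabA H T' → T' ≠ ⊥ → T' = T

lemma stabM_symm_mem {U : Submodule k (Module.End k V)} (hU : StabM H U) (h : H)
    {A : Module.End k V} (hA : A ∈ U) : conjEnd (h : V ≃ₗ[k] V).symm A ∈ U := by
  have := hU h⁻¹ A hA
  rwa [show ((h⁻¹ : H) : V ≃ₗ[k] V) = (h : V ≃ₗ[k] V)⁻¹ from rfl, conjEnd_inv] at this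

lemma stabA_symm_mem {U : AddSubgroup (Module.End k V)} (hU : StabA H U) (h : H)
    {A : Module.End k V} (hA : A ∈ U) : conjEnd (h : V ≃ₗ[k] V).symm A ∈ U := by
  have := hU h⁻¹ A hA
  rwa [show ((h⁻¹ : H) : V ≃ₗ[k] V) = (h : V ≃ₗ[k] V)⁻¹ from rfl, conjEnd_inv] at this

lemma stabA_bot : StabA H (⊥ : AddSubgroup (Module.End k V)) := by
  intro h A hA
  rw [AddSubgroup.mem_bot] at hA ⊢
  rw [hA, conjEnd_zero]

lemma stabA_sup {U U' : AddSubgroup (Module.End k V)} (hU : StabA H U) (hU' : StabA H U') :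
    StabA H (U ⊔ U') := by
  intro h A hA
  rw [AddSubgroup.mem_sup] at hA ⊢
  obtain ⟨y, hy, z, hz, rfl⟩ := hA
  exact ⟨conjEnd _ y, hU h y hy, conjEnd _ z, hU' h z hz, (conjEnd_add _ y z).symm⟩

lemma stabA_inf {U U' : AddSubgroup (Module.End k V)} (hU : StabA H U) (hU' : StabA H U') :
    StabA H (U ⊓ U') := fun h A hA => ⟨hU h A hA.1, hU' h A hA.2⟩

lemma stabA_of_stabM {U : Submodule k (Module.End k V)} (hU : StabM H U) :
    StabA H U.toAddSubgroup := hU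

lemma stabM_N : StabM H (LinearMap.ker (LinearMap.trace k V)) := by
  intro h A hA
  rw [LinearMap.mem_ker] at hA ⊢
  rw [trace_conjEnd, hA]

/-- image of a stable subgroup under a compatible additive equivalence -/
lemma stabA_map (Φ : Module.End k V ≃+ Module.End k V)
    (hcomm : ∀ h : H, ∃ h' : H, ∀ A : Module.End k V,
      conjEnd (h : V ≃ₗ[k] V) (Φ A) = Φ (conjEnd (h' : V ≃ₗ[k] V) A))
    {T : AddSubgroup (Module.End k V)} (hT : StabA H T) :
    StabA H (AddSubgroup.map (Φ : Module.End k V →+ Module.End k V) T) := by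
  intro h A hA
  obtain ⟨t, ht, rfl⟩ := hA
  obtain ⟨h', hh'⟩ := hcomm h
  refine ⟨conjEnd (h' : V ≃ₗ[k] V) t, hT h' t ht, ?_⟩
  exact (hh' t).symm

lemma minA_map (Φ : Module.End k V ≃+ Module.End k V)
    (hcomm : ∀ h : H, ∃ h' : H, ∀ A : Module.End k V,
      conjEnd (h : V ≃ₗ[k] V) (Φ A) = Φ (conjEnd (h' : V ≃ₗ[k] V) A))
    (hcomm' : ∀ h : H, ∃ h' : H, ∀ A : Module.End k V,
      conjEnd (h : V ≃ₗ[k] V) (Φ.symm A) = Φ.symm (conjEnd (h' : V ≃ₗ[k] V) A))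
    {T : AddSubgroup (Module.End k V)} (hT : MinA H T) :
    MinA H (AddSubgroup.map (Φ : Module.End k V →+ Module.End k V) T) := by
  have hid : ∀ (T' : AddSubgroup (Module.End k V)),
      AddSubgroup.map (Φ.symm : Module.End k V →+ Module.End k V)
        (AddSubgroup.map (Φ : Module.End k V →+ Module.End k V) T') = T' := by
    intro T'
    rw [AddSubgroup.map_map]
    have : (Φ.symm : Module.End k V →+ Module.End k V).comp
        (Φ : Module.End k V →+ Module.End k V) = AddMonoidHom.id _ := by
      ext x; simp
    rw [this, AddSubgroup.map_id]
  have hid' : ∀ (T' : AddSubgroup (Module.End k V)),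
      AddSubgroup.map (Φ : Module.End k V →+ Module.End k V)
        (AddSubgroup.map (Φ.symm : Module.End k V →+ Module.End k V) T') = T' := by
    intro T'
    rw [AddSubgroup.map_map]
    have : (Φ : Module.End k V →+ Module.End k V).comp
        (Φ.symm : Module.End k V →+ Module.End k V) = AddMonoidHom.id _ := by
      ext x; simp
    rw [this, AddSubgroup.map_id]
  refine ⟨stabA_map H Φ hcomm hT.1, ?_, ?_⟩
  · intro hbot
    apply hT.2.1
    have := congrArg (AddSubgroup.map (Φ.symm : Module.End k V →+ Module.End k V)) hbot
    rw [hid] at this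
    rw [this]
    ext x
    simp [AddSubgroup.mem_map]
  · intro T' hle hstab hne
    have h1 : AddSubgroup.map (Φ.symm : Module.End k V →+ Module.End k V) T' ≤ T := by
      have := AddSubgroup.map_mono (f := (Φ.symm : Module.End k V →+ Module.End k V)) hle
      rwa [hid] at this
    have h2 : AddSubgroup.map (Φ.symm : Module.End k V →+ Module.End k V) T' ≠ ⊥ := by
      intro hbot
      apply hne
      have := congrArg (AddSubgroup.map (Φ : Module.End k V →+ Module.End k V)) hbot
      rw [hid'] at this
      rw [this]
      ext x
      simp [AddSubgroup.mem_map]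
    have h3 := hT.2.2 _ h1 (stabA_map H Φ.symm hcomm' hstab) h2
    have := congrArg (AddSubgroup.map (Φ : Module.End k V →+ Module.End k V)) h3
    rwa [hid'] at this

end Stability

section Socle

variable [Fintype k] [FiniteDimensional k V]

/-- the trace-zero endomorphisms -/
noncomputable def NN : Submodule k (Module.End k V) := LinearMap.ker (LinearMap.trace k V)

lemma mem_NN {A : Module.End k V} : A ∈ (NN : Submodule k (Module.End k V)) ↔
    LinearMap.trace k V A = 0 := LinearMap.mem_ker

lemma finiteE : Finite (Module.End k V) := Module.finite_of_finite k

variable (H : Subgroup (V ≃ₗ[k] V))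

lemma exists_minM (C : Submodule k (Module.End k V)) (hC : StabM H C) (hne : C ≠ ⊥) :
    ∃ S, S ≤ C ∧ MinM H S := by
  have : Finite (Module.End k V) := finiteE
  obtain ⟨S, hS, hmin⟩ := Set.Finite.exists_minimalFor id
    {S : Submodule k (Module.End k V) | S ≤ C ∧ StabM H S ∧ S ≠ ⊥} (Set.toFinite _)
    ⟨C, le_rfl, hC, hne⟩
  refine ⟨S, hS.1, hS.2.1, hS.2.2, ?_⟩
  intro S' hle hstab hne'
  exact le_antisymm hle (hmin ⟨hle.trans hS.1, hstab, hne'⟩ hle)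

lemma exists_minA (C : AddSubgroup (Module.End k V)) (hC : StabA H C) (hne : C ≠ ⊥) :
    ∃ T, T ≤ C ∧ MinA H T := by
  have : Finite (Module.End k V) := finiteE
  obtain ⟨T, hT, hmin⟩ := Set.Finite.exists_minimalFor id
    {T : AddSubgroup (Module.End k V) | T ≤ C ∧ StabA H T ∧ T ≠ ⊥} (Set.toFinite _)
    ⟨C, le_rfl, hC, hne⟩
  refine ⟨T, hT.1, hT.2.1, hT.2.2, ?_⟩
  intro T' hle hstab hne'
  exact le_antisymm hle (hmin ⟨hle.trans hT.1, hstab, hne'⟩ hle)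

lemma min_not_isotropic (hdim : Module.finrank k V = 2) (h2 : (2:k) ≠ 0)
    (hirr : ∀ W : Submodule k V,
      (∀ h : H, ∀ v ∈ W, (h : V ≃ₗ[k] V) v ∈ W) → W = ⊥ ∨ W = ⊤)
    (S : Submodule k (Module.End k V)) (hSN : S ≤ NN) (hmin : MinM H S)
    (hiso : ∀ x ∈ S, ∀ y ∈ S, LinearMap.trace k V (x * y) = 0) : False := by
  obtain ⟨A, hAS, hAne⟩ := Submodule.exists_mem_ne_zero_of_ne_bot hmin.2.1
  by_cases hfr : Module.finrank k ↥S = 1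
  · -- 1-dimensional case : use the key lemma
    have hv0 : (⟨A, hAS⟩ : ↥S) ≠ 0 := by
      intro hh
      exact hAne (congrArg Subtype.val hh)
    have hall := (finrank_eq_one_iff_of_nonzero' (⟨A, hAS⟩ : ↥S) hv0).mp hfr
    have hstab : ∀ h : H, ∃ c : k, conjEnd (h : V ≃ₗ[k] V) A = c • A := by
      intro h
      obtain ⟨c, hc⟩ := hall ⟨conjEnd (h : V ≃ₗ[k] V) A, hmin.1 h A hAS⟩
      exact ⟨c, (congrArg Subtype.val hc).symm⟩
    have := key_nondeg_line hdim h2 H hirr A (mem_NN.mp (hSN hAS)) hAne hstab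
    exact this (hiso A hAS A hAS)
  · -- higher-dimensional case : dimension count in the dual
    have hfrpos : Module.finrank k ↥S ≠ 0 := by
      intro h0
      exact hmin.2.1 (Submodule.finrank_eq_zero.mp h0)
    have hfr2 : 2 ≤ Module.finrank k ↥S := by omega
    set ρ : ↥S →ₗ[k] (↥(NN : Submodule k (Module.End k V)) →ₗ[k] k) :=
      ((Bform.compl₂ (NN : Submodule k (Module.End k V)).subtype)).domRestrict S with hρ
    have hρ_apply : ∀ (s : ↥S) (x : ↥(NN : Submodule k (Module.End k V))),
        ρ s x = LinearMap.trace k V ((s : Module.End k V) * (x : Module.End k V)) := by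
      intro s x; rfl
    have hinj : Function.Injective ρ := by
      rw [← LinearMap.ker_eq_bot]
      rw [Submodule.eq_bot_iff]
      intro s hs
      have hs0 : ρ s = 0 := hs
      have : (s : Module.End k V) = 0 := by
        apply nondeg hdim h2 _ (mem_NN.mp (hSN s.2))
        intro X hX
        have hXN : X ∈ (NN : Submodule k (Module.End k V)) := mem_NN.mpr hX
        have := LinearMap.congr_fun hs0 ⟨X, hXN⟩
        rw [hρ_apply] at this
        rw [LinearMap.trace_mul_comm]
        exact this
      exact Subtype.ext this
    set Sin : Submodule k ↥(NN : Submodule k (Module.End k V)) :=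
      Submodule.comap (NN : Submodule k (Module.End k V)).subtype S with hSin
    have hrange : LinearMap.range ρ ≤ Sin.dualAnnihilator := by
      rintro φ ⟨s, rfl⟩
      rw [Submodule.mem_dualAnnihilator]
      intro x hx
      rw [hρ_apply]
      exact hiso _ s.2 _ hx
    have e1 : Module.finrank k ↥(LinearMap.range ρ) = Module.finrank k ↥S :=
      LinearMap.finrank_range_of_inj hinj
    have e2 : Module.finrank k ↥(LinearMap.range ρ) ≤ Module.finrank k ↥Sin.dualAnnihilator :=
      Submodule.finrank_mono hrange
    have e3 : Module.finrank k ↥Sin.dualAnnihilator =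
        Module.finrank k (↥(NN : Submodule k (Module.End k V)) ⧸ Sin) :=
      (LinearEquiv.finrank_eq (Subspace.quotEquivAnnihilator Sin)).symm
    have e4 := Submodule.finrank_quotient_add_finrank Sin
    have e5 : Module.finrank k ↥Sin = Module.finrank k ↥S :=
      LinearEquiv.finrank_eq (Submodule.comapSubtypeEquivOfLe hSN)
    have e6 : Module.finrank k ↥(NN : Submodule k (Module.End k V)) = 3 :=
      finrank_N hdim h2
    omega

lemma socle_M (hdim : Module.finrank k V = 2) (h2 : (2:k) ≠ 0)
    (hirr : ∀ W : Submodule k V,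
      (∀ h : H, ∀ v ∈ W, (h : V ≃ₗ[k] V) v ∈ W) → W = ⊥ ∨ W = ⊤) :
    (⨆ S : {S : Submodule k (Module.End k V) // S ≤ NN ∧ MinM H S}, S.val) =
      (NN : Submodule k (Module.End k V)) := by
  set Sig : Submodule k (Module.End k V) :=
    ⨆ S : {S : Submodule k (Module.End k V) // S ≤ NN ∧ MinM H S}, S.val with hSig
  have hSigle : Sig ≤ NN := iSup_le fun i => i.2.1
  have hSigStab : StabM H Sig := by
    intro h A hA
    have hmap : Submodule.map (conjEndₗ (h : V ≃ₗ[k] V)) Sig ≤ Sig := by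
      rw [hSig, Submodule.map_iSup]
      apply iSup_mono
      intro i
      rintro x ⟨a, ha, rfl⟩
      exact i.2.2.1 h a ha
    exact hmap ⟨A, hA, rfl⟩
  by_contra hne
  have hlt : Sig < NN := lt_of_le_of_ne hSigle hne
  -- radical of the socle is zero
  have hrad : ∀ A ∈ Sig, (∀ u ∈ Sig, LinearMap.trace k V (A * u) = 0) → A = 0 := by
    intro A hA horth
    set R : Submodule k (Module.End k V) := Sig ⊓ LinearMap.ker (Tmap Sig) with hR
    have hRstab : StabM H R := by
      intro h x hx
      obtain ⟨hxa, hxb⟩ := Submodule.mem_inf.mp hx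
      refine Submodule.mem_inf.mpr ⟨hSigStab h x hxa, (mem_ker_Tmap_iff _ _).mpr ?_⟩
      intro u hu
      have hx2 := (mem_ker_Tmap_iff Sig x).mp hxb
      have key : conjEnd (h : V ≃ₗ[k] V) x * u =
          conjEnd (h : V ≃ₗ[k] V) (x * conjEnd (h : V ≃ₗ[k] V).symm u) := by
        rw [conjEnd_mul, conjEnd_conjEnd_symm]
      rw [key, trace_conjEnd]
      exact hx2 _ (stabM_symm_mem H hSigStab h hu)
    have hRbot : R = ⊥ := by
      by_contra hRne
      obtain ⟨S, hSle, hSmin⟩ := exists_minM H R hRstab hRne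
      apply min_not_isotropic H hdim h2 hirr S ((hSle.trans inf_le_left).trans hSigle) hSmin
      intro x hx y hy
      have hx' := (mem_ker_Tmap_iff Sig x).mp (Submodule.mem_inf.mp (hSle hx)).2
      exact hx' y (inf_le_left (a := Sig) (b := LinearMap.ker (Tmap Sig)) (hSle hy))
    have : A ∈ R := Submodule.mem_inf.mpr ⟨hA, (mem_ker_Tmap_iff Sig A).mpr horth⟩
    rw [hRbot] at this
    simpa using this
  -- a nonzero stable complement candidate
  have hflt : Module.finrank k ↥Sig < Module.finrank k ↥(NN : Submodule k (Module.End k V)) :=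
    Submodule.finrank_lt_finrank_of_lt hlt
  obtain ⟨x, hxN, hxne, hxorth⟩ := exists_mem_ker_Tmap Sig NN hflt
  set C : Submodule k (Module.End k V) := NN ⊓ LinearMap.ker (Tmap Sig) with hC
  have hCstab : StabM H C := by
    intro h y hy
    obtain ⟨hya, hyb⟩ := Submodule.mem_inf.mp hy
    refine Submodule.mem_inf.mpr ⟨stabM_N H h y hya, (mem_ker_Tmap_iff _ _).mpr ?_⟩
    intro u hu
    have hy2 := (mem_ker_Tmap_iff Sig y).mp hyb
    have key : conjEnd (h : V ≃ₗ[k] V) y * u =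
        conjEnd (h : V ≃ₗ[k] V) (y * conjEnd (h : V ≃ₗ[k] V).symm u) := by
      rw [conjEnd_mul, conjEnd_conjEnd_symm]
    rw [key, trace_conjEnd]
    exact hy2 _ (stabM_symm_mem H hSigStab h hu)
  have hCne : C ≠ ⊥ := by
    intro hbot
    have : x ∈ C := Submodule.mem_inf.mpr ⟨hxN, (mem_ker_Tmap_iff Sig x).mpr hxorth⟩
    rw [hbot] at this
    exact hxne (by simpa using this)
  obtain ⟨S, hSle, hSmin⟩ := exists_minM H C hCstab hCne
  have hSSig : S ≤ Sig := le_iSup (fun i : {S : Submodule k (Module.End k V) //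
      S ≤ NN ∧ MinM H S} => i.val) ⟨S, hSle.trans inf_le_left, hSmin⟩
  obtain ⟨y, hyS, hyne⟩ := Submodule.exists_mem_ne_zero_of_ne_bot hSmin.2.1
  apply hyne
  apply hrad y (hSSig hyS)
  intro u hu
  have := (mem_ker_Tmap_iff Sig y).mp (Submodule.mem_inf.mp (hSle hyS)).2
  exact this u hu

end Socle


section FpSocle

variable [Fintype k] [FiniteDimensional k V] (H : Subgroup (V ≃ₗ[k] V))

lemma sSup_closed (𝒯 : Set (AddSubgroup (Module.End k V)))
    (Φ : Module.End k V →+ Module.End k V)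
    (hΦ : ∀ T ∈ 𝒯, ∀ x ∈ T, Φ x ∈ sSup 𝒯) : ∀ x ∈ sSup 𝒯, Φ x ∈ sSup 𝒯 := by
  intro x hx
  rw [sSup_eq_iSup'] at hx
  refine AddSubgroup.iSup_induction (C := fun y => Φ y ∈ sSup 𝒯) _ hx
    (fun T y hy => hΦ T.1 T.2 y hy) ?_ ?_
  · show Φ 0 ∈ sSup 𝒯
    rw [map_zero]; exact zero_mem _
  · intro a b ha hb
    show Φ (a + b) ∈ sSup 𝒯
    rw [map_add]
    exact add_mem ha hb

lemma conj_comm_lemma (h g : H) (A : Module.End k V) :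
    conjEnd (g : V ≃ₗ[k] V) (conjEnd (h : V ≃ₗ[k] V) A) =
      conjEnd (h : V ≃ₗ[k] V) (conjEnd ((h⁻¹ * g * h : H) : V ≃ₗ[k] V) A) := by
  rw [← conjEnd_mul_equiv, ← conjEnd_mul_equiv]
  congr 1
  have : ((h⁻¹ * g * h : H) : V ≃ₗ[k] V) =
      (h : V ≃ₗ[k] V)⁻¹ * (g : V ≃ₗ[k] V) * (h : V ≃ₗ[k] V) := rfl
  rw [this]
  group

lemma conj_comm_lemma' (h g : H) (A : Module.End k V) :
    conjEnd (g : V ≃ₗ[k] V) (conjEnd (h : V ≃ₗ[k] V).symm A) =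
      conjEnd (h : V ≃ₗ[k] V).symm (conjEnd ((h * g * h⁻¹ : H) : V ≃ₗ[k] V) A) := by
  rw [← conjEnd_inv, ← conjEnd_mul_equiv, ← conjEnd_mul_equiv]
  congr 1
  have : ((h * g * h⁻¹ : H) : V ≃ₗ[k] V) =
      (h : V ≃ₗ[k] V) * (g : V ≃ₗ[k] V) * (h : V ≃ₗ[k] V)⁻¹ := rfl
  rw [this, show ((h : V ≃ₗ[k] V)).symm = (h : V ≃ₗ[k] V)⁻¹ from rfl]
  group

lemma minM_le_fpsocle (hdim : Module.finrank k V = 2) (h2 : (2:k) ≠ 0)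
    (S : Submodule k (Module.End k V)) (hSN : S ≤ NN) (hmin : MinM H S) :
    S.toAddSubgroup ≤
      sSup {T : AddSubgroup (Module.End k V) | MinA H T ∧
        T ≤ (NN : Submodule k (Module.End k V)).toAddSubgroup} := by
  classical
  set 𝒯S : Set (AddSubgroup (Module.End k V)) :=
    {T | MinA H T ∧ T ≤ S.toAddSubgroup} with h𝒯S
  set GS : AddSubgroup (Module.End k V) := sSup 𝒯S with hGS
  have hGS_le : ∀ x ∈ GS, x ∈ S := by
    intro x hx
    exact (sSup_le (fun T hT => hT.2) : GS ≤ S.toAddSubgroup) hx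
  -- closure under scalars
  have hsmul : ∀ (c : k), ∀ x ∈ GS, c • x ∈ GS := by
    intro c x hx
    by_cases hc : c = 0
    · rw [hc, zero_smul]; exact zero_mem _
    · set Φ : Module.End k V ≃+ Module.End k V :=
        DistribMulAction.toAddEquiv (Module.End k V) (Units.mk0 c hc) with hΦ
      have hΦ_apply : ∀ y : Module.End k V, Φ y = c • y := by
        intro y
        show (Units.mk0 c hc) • y = c • y
        rw [Units.smul_def]
        rfl
      have hΦ_symm_apply : ∀ y : Module.End k V, Φ.symm y = c⁻¹ • y := by
        intro y
        show (Units.mk0 c hc)⁻¹ • y = c⁻¹ • y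
        rw [Units.smul_def]
        rfl
      have hcomm : ∀ h : H, ∃ h' : H, ∀ A : Module.End k V,
          conjEnd (h : V ≃ₗ[k] V) (Φ A) = Φ (conjEnd (h' : V ≃ₗ[k] V) A) := by
        intro h
        exact ⟨h, fun A => by rw [hΦ_apply, hΦ_apply, conjEnd_smul]⟩
      have hcomm' : ∀ h : H, ∃ h' : H, ∀ A : Module.End k V,
          conjEnd (h : V ≃ₗ[k] V) (Φ.symm A) = Φ.symm (conjEnd (h' : V ≃ₗ[k] V) A) := by
        intro h
        exact ⟨h, fun A => by rw [hΦ_symm_apply, hΦ_symm_apply, conjEnd_smul]⟩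
      have := sSup_closed 𝒯S (Φ : Module.End k V →+ Module.End k V) ?_ x hx
      · simp only [AddMonoidHom.coe_coe] at this
        rw [hΦ_apply x] at this
        exact this
      · intro T hT y hy
        have hmem : AddSubgroup.map (Φ : Module.End k V →+ Module.End k V) T ∈ 𝒯S := by
          constructor
          · exact minA_map H Φ hcomm hcomm' hT.1
          · rintro z ⟨t, ht, rfl⟩
            show Φ t ∈ S
            rw [hΦ_apply]
            exact S.smul_mem c (hT.2 ht)
        exact le_sSup hmem ⟨y, hy, rfl⟩
  -- closure under conjugation
  have hconj : ∀ (h : H), ∀ x ∈ GS, conjEnd (h : V ≃ₗ[k] V) x ∈ GS := by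
    intro h x hx
    set Φ : Module.End k V ≃+ Module.End k V := conjEndₐ (h : V ≃ₗ[k] V) with hΦ
    have hcomm : ∀ g : H, ∃ g' : H, ∀ A : Module.End k V,
        conjEnd (g : V ≃ₗ[k] V) (Φ A) = Φ (conjEnd (g' : V ≃ₗ[k] V) A) := by
      intro g
      exact ⟨h⁻¹ * g * h, fun A => conj_comm_lemma H h g A⟩
    have hcomm' : ∀ g : H, ∃ g' : H, ∀ A : Module.End k V,
        conjEnd (g : V ≃ₗ[k] V) (Φ.symm A) = Φ.symm (conjEnd (g' : V ≃ₗ[k] V) A) := by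
      intro g
      exact ⟨h * g * h⁻¹, fun A => conj_comm_lemma' H h g A⟩
    have := sSup_closed 𝒯S (Φ : Module.End k V →+ Module.End k V) ?_ x hx
    · exact this
    · intro T hT y hy
      have hmem : AddSubgroup.map (Φ : Module.End k V →+ Module.End k V) T ∈ 𝒯S := by
        constructor
        · exact minA_map H Φ hcomm hcomm' hT.1
        · rintro z ⟨t, ht, rfl⟩
          show conjEnd (h : V ≃ₗ[k] V) t ∈ S
          exact hmin.1 h t (hT.2 ht)
      exact le_sSup hmem ⟨y, hy, rfl⟩
  -- the submodule generated
  set Gsub : Submodule k (Module.End k V) :=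
    { carrier := ↑GS
      add_mem' := fun ha hb => add_mem ha hb
      zero_mem' := zero_mem _
      smul_mem' := fun c a ha => hsmul c a ha } with hGsub
  have hGsub_mem : ∀ y : Module.End k V, y ∈ Gsub ↔ y ∈ GS := fun y => Iff.rfl
  have hGsub_le : Gsub ≤ S := fun y hy => hGS_le y hy
  have hGsub_stab : StabM H Gsub := fun h A hA => hconj h A hA
  have hGsub_ne : Gsub ≠ ⊥ := by
    have hSA_stab : StabA H S.toAddSubgroup := stabA_of_stabM H hmin.1
    have hSA_ne : S.toAddSubgroup ≠ ⊥ := by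
      obtain ⟨y, hy, hyne⟩ := Submodule.exists_mem_ne_zero_of_ne_bot hmin.2.1
      intro hbot
      have : y ∈ (⊥ : AddSubgroup (Module.End k V)) := hbot ▸ hy
      exact hyne (by simpa using this)
    obtain ⟨T, hTle, hTmin⟩ := exists_minA H S.toAddSubgroup hSA_stab hSA_ne
    obtain ⟨y, hy, hyne⟩ : ∃ y ∈ T, y ≠ 0 := by
      by_contra hcon
      push_neg at hcon
      exact hTmin.2.1 ((AddSubgroup.eq_bot_iff_forall _).mpr hcon)
    intro hbot
    have hyGS : y ∈ GS := le_sSup (show T ∈ 𝒯S from ⟨hTmin, hTle⟩) hy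
    have : y ∈ (⊥ : Submodule k (Module.End k V)) := hbot ▸ hyGS
    exact hyne (by simpa using this)
  have hfin := hmin.2.2 Gsub hGsub_le hGsub_stab hGsub_ne
  intro x hx
  have hxG : x ∈ GS := by
    have : x ∈ Gsub := hfin ▸ (hx : x ∈ S)
    exact this
  refine (sSup_le_sSup ?_ : GS ≤ _) hxG
  intro T hT
  exact ⟨hT.1, fun z hz => by
    have : z ∈ S := hT.2 hz
    exact hSN this⟩

lemma fpsocle (hdim : Module.finrank k V = 2) (h2 : (2:k) ≠ 0)
    (hirr : ∀ W : Submodule k V,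
      (∀ h : H, ∀ v ∈ W, (h : V ≃ₗ[k] V) v ∈ W) → W = ⊥ ∨ W = ⊤) :
    (NN : Submodule k (Module.End k V)).toAddSubgroup ≤
      sSup {T : AddSubgroup (Module.End k V) | MinA H T ∧
        T ≤ (NN : Submodule k (Module.End k V)).toAddSubgroup} := by
  intro x hx
  have hxN : x ∈ (NN : Submodule k (Module.End k V)) := hx
  rw [← socle_M H hdim h2 hirr] at hxN
  refine Submodule.iSup_induction
    (motive := fun y => y ∈ sSup {T : AddSubgroup (Module.End k V) | MinA H T ∧
      T ≤ (NN : Submodule k (Module.End k V)).toAddSubgroup}) _ hxN ?_ ?_ ?_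
  · intro i y hy
    exact minM_le_fpsocle H hdim h2 i.1 i.2.1 i.2.2 hy
  · exact zero_mem _
  · intro a b ha hb
    exact add_mem ha hb

lemma compl_exists (hdim : Module.finrank k V = 2) (h2 : (2:k) ≠ 0)
    (hirr : ∀ W : Submodule k V,
      (∀ h : H, ∀ v ∈ W, (h : V ≃ₗ[k] V) v ∈ W) → W = ⊥ ∨ W = ⊤)
    (W₀ : AddSubgroup (Module.End k V))
    (hW₀N : W₀ ≤ (NN : Submodule k (Module.End k V)).toAddSubgroup)
    (hW₀s : StabA H W₀) :
    ∃ C : AddSubgroup (Module.End k V), StabA H C ∧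
      (∀ x, x ∈ C → x ∈ W₀ → x = 0) ∧
      (∀ x ∈ (NN : Submodule k (Module.End k V)), ∃ w ∈ W₀, ∃ c ∈ C, w + c = x) := by
  classical
  have : Finite (Module.End k V) := finiteE
  set 𝒞 : Set (AddSubgroup (Module.End k V)) :=
    {C | C ≤ (NN : Submodule k (Module.End k V)).toAddSubgroup ∧ StabA H C ∧ C ⊓ W₀ = ⊥}
    with h𝒞
  have h𝒞ne : 𝒞.Nonempty := ⟨⊥, bot_le, stabA_bot H, bot_inf_eq _⟩
  obtain ⟨C, hC, hmax⟩ := Set.Finite.exists_maximalFor id 𝒞 (Set.toFinite _) h𝒞ne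
  have hsup : ∀ T : AddSubgroup (Module.End k V), MinA H T →
      T ≤ (NN : Submodule k (Module.End k V)).toAddSubgroup → T ≤ W₀ ⊔ C := by
    intro T hTmin hTN
    by_contra hT
    have hTint : T ⊓ (W₀ ⊔ C) = ⊥ := by
      by_contra hne
      have := hTmin.2.2 (T ⊓ (W₀ ⊔ C)) inf_le_left
        (stabA_inf H hTmin.1 (stabA_sup H hW₀s hC.2.1)) hne
      apply hT
      rw [← this]
      exact inf_le_right
    have hC' : C ⊔ T ∈ 𝒞 := by
      refine ⟨sup_le hC.1 hTN, stabA_sup H hC.2.1 hTmin.1, ?_⟩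
      rw [eq_bot_iff]
      intro x hx
      obtain ⟨hx1, hx2⟩ := AddSubgroup.mem_inf.mp hx
      rw [AddSubgroup.mem_sup] at hx1
      obtain ⟨c, hc, t, ht, hct⟩ := hx1
      have htmem : t ∈ T ⊓ (W₀ ⊔ C) := by
        refine AddSubgroup.mem_inf.mpr ⟨ht, ?_⟩
        have : t = x - c := by rw [← hct]; abel
        rw [this]
        exact sub_mem (AddSubgroup.mem_sup_left hx2) (AddSubgroup.mem_sup_right hc)
      rw [hTint] at htmem
      have ht0 : t = 0 := by simpa using htmem
      have hxc : x = c := by rw [← hct, ht0, add_zero]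
      have : x ∈ C ⊓ W₀ := AddSubgroup.mem_inf.mpr ⟨hxc ▸ hc, hx2⟩
      rw [hC.2.2] at this
      simpa using this
    have heq : C = C ⊔ T := le_antisymm le_sup_left (hmax hC' le_sup_left)
    apply hT
    calc T ≤ C ⊔ T := le_sup_right
    _ = C := heq.symm
    _ ≤ W₀ ⊔ C := le_sup_right
  refine ⟨C, hC.2.1, ?_, ?_⟩
  · intro x hx1 hx2
    have : x ∈ C ⊓ W₀ := AddSubgroup.mem_inf.mpr ⟨hx1, hx2⟩
    rw [hC.2.2] at this
    simpa using this
  · intro x hx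
    have h1 : x ∈ sSup {T : AddSubgroup (Module.End k V) | MinA H T ∧
        T ≤ (NN : Submodule k (Module.End k V)).toAddSubgroup} :=
      fpsocle H hdim h2 hirr hx
    have h2' : sSup {T : AddSubgroup (Module.End k V) | MinA H T ∧
        T ≤ (NN : Submodule k (Module.End k V)).toAddSubgroup} ≤ W₀ ⊔ C :=
      sSup_le (fun T hT => hsup T hT.1 hT.2)
    exact AddSubgroup.mem_sup.mp (h2' h1)

end FpSocle


end Stmt11Aux

open Stmt11Aux in
/-- Let `p` be an odd prime, `k` a finite field of characteristic `p`, `V` a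
`2`-dimensional `k`-vector space and `H ≤ GL(V)` acting irreducibly on `V`.  The following are
equivalent: (a) for every `H`-stable additive subgroup `W ⊆ End_k(V)`, every `H`-equivariant
additive (equivalently, `𝔽_p`-linear) map `W → V` vanishes; (b) every `H`-equivariant additive
map `End_k^0(V) → V` vanishes, where `End_k^0(V)` is the space of trace-zero endomorphisms. -/
theorem stmt11 {k V : Type} [Field k] [Fintype k] [AddCommGroup V] [Module k V]
    [FiniteDimensional k V]
    (p : ℕ) (hp : p.Prime) (hp2 : p ≠ 2) [CharP k p]
    (hdim : Module.finrank k V = 2)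
    (H : Subgroup (V ≃ₗ[k] V))
    (hirr : ∀ W : Submodule k V,
      (∀ h : H, ∀ v ∈ W, (h : V ≃ₗ[k] V) v ∈ W) → W = ⊥ ∨ W = ⊤) :
    (∀ W : AddSubgroup (Module.End k V),
      (∀ h : H, ∀ A ∈ W, conjEnd (h : V ≃ₗ[k] V) A ∈ W) →
      ∀ f : W → V,
        (∀ A B : W, f (A + B) = f A + f B) →
        (∀ (h : H) (A B : W),
          (B : Module.End k V) = conjEnd (h : V ≃ₗ[k] V) (A : Module.End k V) →
          f B = (h : V ≃ₗ[k] V) (f A)) →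
        ∀ A : W, f A = 0) ↔
    (∀ f : (LinearMap.ker (LinearMap.trace k V) : Submodule k (Module.End k V)) → V,
      (∀ A B, f (A + B) = f A + f B) →
      (∀ (h : H)
        (A B : (LinearMap.ker (LinearMap.trace k V) : Submodule k (Module.End k V))),
        (B : Module.End k V) = conjEnd (h : V ≃ₗ[k] V) (A : Module.End k V) →
        f B = (h : V ≃ₗ[k] V) (f A)) →
      ∀ A, f A = 0) := by
  classical
  have h2 : (2:k) ≠ 0 := by
    intro h
    have h' : ((2:ℕ) : k) = 0 := by exact_mod_cast h
    have hdvd := (CharP.cast_eq_zero_iff k p 2).mp h'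
    exact hp2 ((Nat.prime_dvd_prime_iff_eq hp Nat.prime_two).mp hdvd)
  constructor
  · -- (a) → (b)
    intro ha f hadd hequiv A
    set Wn : AddSubgroup (Module.End k V) :=
      (LinearMap.ker (LinearMap.trace k V) : Submodule k (Module.End k V)).toAddSubgroup with hWn
    have hstab : ∀ h : H, ∀ B ∈ Wn, conjEnd (h : V ≃ₗ[k] V) B ∈ Wn := by
      intro h B hB
      have hBk : B ∈ (LinearMap.ker (LinearMap.trace k V) : Submodule k (Module.End k V)) :=
        (Submodule.mem_toAddSubgroup _).mp hB
      exact (Submodule.mem_toAddSubgroup _).mpr (stabM_N H h B hBk)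
    set toN : ↥Wn → ↥(LinearMap.ker (LinearMap.trace k V) : Submodule k (Module.End k V)) :=
      fun x => ⟨x.1, (Submodule.mem_toAddSubgroup _).mp x.2⟩ with htoN
    have htoN_add : ∀ x y : ↥Wn, toN (x + y) = toN x + toN y := by
      intro x y; apply Subtype.ext; rfl
    have := ha Wn hstab (fun x => f (toN x))
      (by
        intro x y
        show f (toN (x + y)) = f (toN x) + f (toN y)
        rw [htoN_add]
        exact hadd _ _)
      (by
        intro h A' B' hAB
        exact hequiv h (toN A') (toN B') hAB)
      ⟨A.1, (Submodule.mem_toAddSubgroup _).mpr A.2⟩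
    rwa [show toN ⟨A.1, (Submodule.mem_toAddSubgroup _).mpr A.2⟩ = A from Subtype.ext rfl] at this
  · -- (b) → (a)
    intro hb W hWstab f hadd hequiv A
    have hf0 : f 0 = 0 := by
      have h := hadd 0 0
      rw [add_zero] at h
      exact (add_eq_left.mp h.symm)
    have hfsub : ∀ x y : ↥W, f (x - y) = f x - f y := by
      intro x y
      have h := hadd (x - y) y
      rw [sub_add_cancel] at h
      exact (eq_sub_of_add_eq h.symm)
    have fcongr : ∀ (a b : Module.End k V) (ha : a ∈ W) (hb' : b ∈ W), a = b →
        f ⟨a, ha⟩ = f ⟨b, hb'⟩ := by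
      rintro a b ha hb' rfl; rfl
    set W₀ : AddSubgroup (Module.End k V) :=
      W ⊓ (NN : Submodule k (Module.End k V)).toAddSubgroup with hW₀
    have hW₀N : W₀ ≤ (NN : Submodule k (Module.End k V)).toAddSubgroup := inf_le_right
    have hNstabA : StabA H (NN : Submodule k (Module.End k V)).toAddSubgroup :=
      stabA_of_stabM H (stabM_N H)
    have hW₀s : StabA H W₀ := stabA_inf H hWstab hNstabA
    obtain ⟨C, hCs, hCW₀, hdec⟩ := compl_exists H hdim h2 hirr W₀ hW₀N hW₀s
    -- decomposition function
    set D : Module.End k V → Module.End k V × Module.End k V := fun x =>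
      if hx : x ∈ (NN : Submodule k (Module.End k V)) then
        ⟨Classical.choose (hdec x hx),
         Classical.choose (Classical.choose_spec (hdec x hx)).2⟩
      else 0 with hD
    have hDprop : ∀ x ∈ (NN : Submodule k (Module.End k V)),
        (D x).1 ∈ W₀ ∧ (D x).2 ∈ C ∧ (D x).1 + (D x).2 = x := by
      intro x hx
      have h1 := Classical.choose_spec (hdec x hx)
      have h3 := Classical.choose_spec h1.2
      exact ⟨by simp only [hD, dif_pos hx]; exact h1.1, by simp only [hD, dif_pos hx]; exact h3.1,
        by simp only [hD, dif_pos hx]; exact h3.2⟩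
    -- uniqueness of decompositions
    have hun : ∀ w₁ c₁ w₂ c₂ : Module.End k V, w₁ ∈ W₀ → c₁ ∈ C → w₂ ∈ W₀ → c₂ ∈ C →
        w₁ + c₁ = w₂ + c₂ → w₁ = w₂ := by
      intro w₁ c₁ w₂ c₂ hw₁ hc₁ hw₂ hc₂ heq
      have hsub : w₁ - w₂ = c₂ - c₁ :=
        sub_eq_sub_iff_add_eq_add.mpr (by rw [heq, add_comm])
      have hmem1 : w₁ - w₂ ∈ W₀ := sub_mem hw₁ hw₂
      have hmem2 : w₁ - w₂ ∈ C := by rw [hsub]; exact sub_mem hc₂ hc₁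
      have := hCW₀ _ hmem2 hmem1
      exact sub_eq_zero.mp this
    have hDW : ∀ x ∈ (NN : Submodule k (Module.End k V)), (D x).1 ∈ W := by
      intro x hx
      exact (AddSubgroup.mem_inf.mp (hDprop x hx).1).1
    -- additivity of the W₀-component
    have hDadd : ∀ a b : Module.End k V, a ∈ (NN : Submodule k (Module.End k V)) →
        b ∈ (NN : Submodule k (Module.End k V)) → (D (a + b)).1 = (D a).1 + (D b).1 := by
      intro a b ha hb'
      obtain ⟨hw, hc, heq⟩ := hDprop (a + b) (add_mem ha hb')
      obtain ⟨hwa, hca, heqa⟩ := hDprop a ha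
      obtain ⟨hwb, hcb, heqb⟩ := hDprop b hb'
      apply hun _ (D (a+b)).2 _ ((D a).2 + (D b).2) hw hc (add_mem hwa hwb) (add_mem hca hcb)
      rw [heq]
      rw [show (D a).1 + (D b).1 + ((D a).2 + (D b).2)
          = ((D a).1 + (D a).2) + ((D b).1 + (D b).2) from by abel, heqa, heqb]
    -- equivariance of the W₀-component
    have hDconj : ∀ (h : H) (a : Module.End k V), a ∈ (NN : Submodule k (Module.End k V)) →
        (D (conjEnd (h : V ≃ₗ[k] V) a)).1 = conjEnd (h : V ≃ₗ[k] V) ((D a).1) := by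
      intro h a ha
      have hconjmem : conjEnd (h : V ≃ₗ[k] V) a ∈ (NN : Submodule k (Module.End k V)) :=
        stabM_N H h a ha
      obtain ⟨hw, hc, heq⟩ := hDprop _ hconjmem
      obtain ⟨hwa, hca, heqa⟩ := hDprop a ha
      apply hun _ (D (conjEnd (h : V ≃ₗ[k] V) a)).2 _
        (conjEnd (h : V ≃ₗ[k] V) ((D a).2)) hw hc (hW₀s h _ hwa) (hCs h _ hca)
      rw [heq, ← conjEnd_add, heqa]
    -- the extended map
    set F : ↥(LinearMap.ker (LinearMap.trace k V) : Submodule k (Module.End k V)) → V :=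
      fun x => f ⟨(D x.1).1, hDW x.1 x.2⟩ with hF
    have hFadd : ∀ x y, F (x + y) = F x + F y := by
      intro x y
      have e1 : ((x + y : ↥(LinearMap.ker (LinearMap.trace k V) :
          Submodule k (Module.End k V))) : Module.End k V) = x.1 + y.1 := rfl
      calc F (x + y) = f ⟨(D (x.1 + y.1)).1, hDW _ (add_mem x.2 y.2)⟩ := by
              exact fcongr _ _ _ _ rfl
            _ = f (⟨(D x.1).1, hDW x.1 x.2⟩ + ⟨(D y.1).1, hDW y.1 y.2⟩) := by
              apply fcongr
              rw [hDadd x.1 y.1 x.2 y.2]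
            _ = F x + F y := hadd _ _
    have hFequiv : ∀ (h : H) (A' B' : ↥(LinearMap.ker (LinearMap.trace k V) :
        Submodule k (Module.End k V))),
        (B' : Module.End k V) = conjEnd (h : V ≃ₗ[k] V) (A' : Module.End k V) →
        F B' = (h : V ≃ₗ[k] V) (F A') := by
      intro h A' B' hAB
      have key : (D B'.1).1 = conjEnd (h : V ≃ₗ[k] V) ((D A'.1).1) := by
        rw [show B'.1 = conjEnd (h : V ≃ₗ[k] V) A'.1 from hAB]
        exact hDconj h A'.1 A'.2
      calc F B' = f ⟨conjEnd (h : V ≃ₗ[k] V) ((D A'.1).1),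
            hWstab h _ (hDW A'.1 A'.2)⟩ := by
              apply fcongr
              exact key
        _ = (h : V ≃ₗ[k] V) (f ⟨(D A'.1).1, hDW A'.1 A'.2⟩) := by
              exact hequiv h ⟨(D A'.1).1, hDW A'.1 A'.2⟩ _ rfl
        _ = (h : V ≃ₗ[k] V) (F A') := rfl
    have hF0 := hb F hFadd hFequiv
    -- f vanishes on W₀
    have hvan : ∀ y (hy : y ∈ W₀), f ⟨y, (AddSubgroup.mem_inf.mp hy).1⟩ = 0 := by
      intro y hy
      have hyN : y ∈ (NN : Submodule k (Module.End k V)) :=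
        (Submodule.mem_toAddSubgroup _).mp (AddSubgroup.mem_inf.mp hy).2
      obtain ⟨hw, hc, heq⟩ := hDprop y hyN
      have hD1 : (D y).1 = y := by
        apply hun _ (D y).2 _ 0 hw hc hy (zero_mem C)
        rw [heq, add_zero]
      have := hF0 ⟨y, hyN⟩
      rw [hF] at this
      calc f ⟨y, (AddSubgroup.mem_inf.mp hy).1⟩
          = f ⟨(D y).1, hDW y hyN⟩ := (fcongr _ _ _ _ hD1).symm
        _ = 0 := this
    -- conclude
    have hfix : ∀ h : H, (h : V ≃ₗ[k] V) (f A) = f A := by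
      intro h
      set B : ↥W := ⟨conjEnd (h : V ≃ₗ[k] V) A.1, hWstab h A.1 A.2⟩ with hB
      have hfB : f B = (h : V ≃ₗ[k] V) (f A) := hequiv h A B rfl
      have hdmem : B.1 - A.1 ∈ W₀ := by
        refine AddSubgroup.mem_inf.mpr ⟨sub_mem B.2 A.2, ?_⟩
        refine (Submodule.mem_toAddSubgroup _).mpr ?_
        have : LinearMap.trace k V (B.1 - A.1) = 0 := by
          rw [map_sub, hB]
          show LinearMap.trace k V (conjEnd (h : V ≃ₗ[k] V) A.1) - LinearMap.trace k V A.1 = 0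
          rw [trace_conjEnd, sub_self]
        exact this
      have hfd : f (B - A) = 0 := by
        have := hvan (B.1 - A.1) hdmem
        calc f (B - A) = f ⟨B.1 - A.1, (AddSubgroup.mem_inf.mp hdmem).1⟩ := by
              apply fcongr; rfl
          _ = 0 := this
      have := hfsub B A
      rw [hfd] at this
      have hBA : f B = f A := by
        have := this.symm
        rwa [sub_eq_zero] at this
      rw [← hfB, hBA]
    exact VH_eq_bot hdim H hirr (f A) hfix
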